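/- Let K be a finite-dimensional solvable Lie algebra over an algebraically closed field F of characteristic 0, and let I be a finite-dimensional K-module via ψ : K → gl(I). Suppose there is a compatible pair (α,β) ∈ Der(K) × gl(I) (satisfying β(ψ(k)(v)) = ψ(α(k))(v) + ψ(k)(β(v)) for all k, v) with α bijective of finite order. Then ψ(k) is a nilpotent endomorphism for every k ∈ K. -/

import Mathlib

attribute [local instance 100] LieRing.ofAssociativeRing

open Module

/-- An endomorphism `x` with `⁅β, x⁆ = ζ • x`, `ζ ≠ 0`, is nilpotent (finite dims, char 0). -/
lemma aux_nilpotent_of_bracket_smul {F : Type*} [Field F] [CharZero F]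
    {I : Type*} [AddCommGroup I] [Module F I] [FiniteDimensional F I]
    {β x : Module.End F I} {ζ : F} (hζ : ζ ≠ 0)
    (h : ⁅β, x⁆ = ζ • x) : IsNilpotent x := by
  by_contra hx
  have hpow : ∀ m : ℕ, x ^ (m + 1) ≠ 0 := fun m hm => hx ⟨m + 1, hm⟩
  set adβ : Module.End F (Module.End F I) := LieAlgebra.ad F (Module.End F I) β with hadβ
  have hadap : ∀ y, adβ y = β * y - y * β := fun y => by
    simp [hadβ, LieAlgebra.ad_apply, Ring.lie_def]
  have hb : β * x - x * β = ζ • x := by rw [← Ring.lie_def]; exact h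
  have key : ∀ m : ℕ, adβ (x ^ (m + 1)) = (((m + 1 : ℕ) : F) * ζ) • x ^ (m + 1) := by
    intro m
    induction m with
    | zero => simpa [hadap] using hb
    | succ m ih =>
      have hx2 : x ^ (m + 2) = x * x ^ (m + 1) := by rw [pow_succ']
      rw [hadap] at ih ⊢
      rw [hx2]
      calc β * (x * x ^ (m + 1)) - x * x ^ (m + 1) * β
          = (β * x - x * β) * x ^ (m + 1) + x * (β * x ^ (m + 1) - x ^ (m + 1) * β) := by
            noncomm_ring
        _ = (ζ • x) * x ^ (m + 1) + x * ((((m + 1 : ℕ) : F) * ζ) • x ^ (m + 1)) := by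
            rw [hb, ih]
        _ = (((m + 2 : ℕ) : F) * ζ) • (x * x ^ (m + 1)) := by
            rw [smul_mul_assoc, mul_smul_comm, ← add_smul]
            congr 1
            push_cast
            ring
  have hinj : Function.Injective (fun m : ℕ => ((m + 1 : ℕ) : F) * ζ) := by
    intro a b hab
    simp only at hab
    have h2 : ((a + 1 : ℕ) : F) = ((b + 1 : ℕ) : F) := mul_right_cancel₀ hζ hab
    exact Nat.succ_injective (Nat.cast_injective h2)
  have hev : ∀ m : ℕ, adβ.HasEigenvector (((m + 1 : ℕ) : F) * ζ) (x ^ (m + 1)) := fun m =>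
    ⟨Module.End.mem_eigenspace_iff.mpr (key m), hpow m⟩
  have hli := adβ.eigenvectors_linearIndependent' _ hinj _ hev
  exact Module.Finite.not_linearIndependent_of_infinite _ hli

open Module LieModule

universe u v

/-- If a finite-dimensional solvable Lie algebra is spanned by a bracket-closed set all of whose
elements act nilpotently on a finite-dimensional module, then every element acts nilpotently. -/
lemma aux_main (F : Type*) [Field F] (N : ℕ) :
    ∀ (K : Type u) [LieRing K] [LieAlgebra F K],
    ∀ [FiniteDimensional F K] [LieAlgebra.IsSolvable K],
    ∀ (I : Type v) [AddCommGroup I] [Module F I],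
    ∀ [FiniteDimensional F I],
    ∀ (ψ : K →ₗ⁅F⁆ Module.End F I) (s : Set K),
      finrank F K + finrank F I ≤ N →
      Submodule.span F s = ⊤ →
      (∀ x ∈ s, ∀ y ∈ s, ⁅x, y⁆ ∈ s) →
      (∀ x ∈ s, IsNilpotent (ψ x)) →
      ∀ k : K, IsNilpotent (ψ k) := by
  induction N using Nat.strong_induction_on with
  | _ N IH =>
  intro K _ _ _ _ I _ _ _ ψ s hN hspan hbr hnil k
  rcases subsingleton_or_nontrivial I with hI | hI
  · exact ⟨1, Subsingleton.elim _ _⟩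
  rcases subsingleton_or_nontrivial K with hK | hK
  · have hk0 : k = 0 := Subsingleton.elim k 0
    subst hk0
    simp only [map_zero]
    exact ⟨1, by simp⟩
  -- the derived ideal
  set D : LieIdeal F K := LieAlgebra.derivedSeries F K 1 with hD
  have hD1 : D = ⁅(⊤ : LieIdeal F K), (⊤ : LieIdeal F K)⁆ := by
    rw [hD, LieAlgebra.derivedSeries_def, LieAlgebra.derivedSeriesOfIdeal_succ,
      LieAlgebra.derivedSeriesOfIdeal_zero]
  have hmemD : ∀ x y : K, ⁅x, y⁆ ∈ D := fun x y => by
    rw [hD1]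
    exact LieSubmodule.lie_mem_lie (LieSubmodule.mem_top x) (LieSubmodule.mem_top y)
  have hDlt : D < ⊤ := hD ▸ LieAlgebra.derivedSeries_lt_top_of_solvable F K
  haveI : LieAlgebra.IsSolvable ↥D :=
    Function.Injective.lieAlgebra_isSolvable (f := D.incl) (LieIdeal.incl_injective D)
  -- spanning set for D
  set s' : Set ↥D := (Subtype.val) ⁻¹' s with hs'
  have himg : Subtype.val '' s' = s ∩ (D : Set K) := by
    rw [hs', Set.image_preimage_eq_inter_range, Subtype.range_coe]
  set T : Submodule F K := Submodule.span F (s ∩ (D : Set K)) with hT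
  have key1 : ∀ x ∈ s, ∀ y : K, ⁅x, y⁆ ∈ T := by
    intro x hx y
    have hy : y ∈ Submodule.span F s := by rw [hspan]; trivial
    induction hy using Submodule.span_induction with
    | mem y hy => exact Submodule.subset_span ⟨hbr x hx y hy, hmemD x y⟩
    | zero => simp
    | add y z _ _ ihy ihz => rw [lie_add]; exact T.add_mem ihy ihz
    | smul c y _ ihy => rw [lie_smul]; exact T.smul_mem c ihy
  have key2 : ∀ x y : K, ⁅x, y⁆ ∈ T := by
    intro x y
    have hx : x ∈ Submodule.span F s := by rw [hspan]; trivial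
    induction hx using Submodule.span_induction with
    | mem x hx => exact key1 x hx y
    | zero => simp
    | add x z _ _ ihx ihz => rw [add_lie]; exact T.add_mem ihx ihz
    | smul c x _ ihx => rw [smul_lie]; exact T.smul_mem c ihx
  have hDT : D.toSubmodule ≤ T := by
    rw [hD1, LieSubmodule.lieIdeal_oper_eq_linear_span']
    rw [Submodule.span_le]
    rintro z ⟨x, -, y, -, rfl⟩
    exact key2 x y
  have hspan' : Submodule.span F s' = (⊤ : Submodule F ↥D) := by
    rw [eq_top_iff]
    rintro ⟨z, hz⟩ -
    have hz' : z ∈ Submodule.map D.toSubmodule.subtype (Submodule.span F s') := by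
      rw [Submodule.map_span]
      show z ∈ Submodule.span F (Subtype.val '' s')
      rw [himg]
      exact hDT hz
    obtain ⟨w, hw, hwz⟩ := hz'
    have hww : w = ⟨z, hz⟩ := Subtype.ext hwz
    rwa [← hww]
  -- apply induction to D
  have hfD : finrank F ↥D < finrank F K := by
    have h2 : D.toSubmodule < ⊤ := by
      rcases lt_iff_le_and_ne.mp hDlt with ⟨hle, hne⟩
      refine lt_iff_le_and_ne.mpr ⟨le_top, fun hcon => hne ?_⟩
      rw [← LieSubmodule.toSubmodule_inj, hcon, LieSubmodule.top_toSubmodule]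
    exact Submodule.finrank_lt h2.ne
  set ψ' : ↥D →ₗ⁅F⁆ Module.End F I := ψ.comp D.incl with hψ'
  have hDnil : ∀ d : ↥D, IsNilpotent (ψ' d) := by
    refine IH (finrank F ↥D + finrank F I) (by omega) ↥D I ψ' s' le_rfl hspan' ?_ ?_
    · intro x hx y hy
      exact hbr _ hx _ hy
    · intro x hx
      show IsNilpotent (ψ (D.incl x))
      rw [LieIdeal.incl_apply]
      exact hnil _ hx
  -- Engel: the action of D on I is nilpotent, so the trivial submodule W is nonzero
  letI : LieRingModule ↥D I := LieRingModule.compLieHom I ψ'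
  letI : LieModule F ↥D I := LieModule.compLieHom I ψ'
  have htoEnd : ∀ d : ↥D, toEnd F ↥D I d = ψ' d := fun d => by ext v; rfl
  haveI : LieModule.IsNilpotent ↥D I :=
    (LieModule.isNilpotent_iff_forall' (R := F) (L := ↥D) (M := I)).mpr
      fun d => htoEnd d ▸ hDnil d
  haveI hWnt : Nontrivial ↥(maxTrivSubmodule F ↥D I) :=
    nontrivial_max_triv_of_isNilpotent F ↥D I
  set W : Submodule F I := (maxTrivSubmodule F ↥D I).toSubmodule with hW
  have hWmem : ∀ v : I, v ∈ W ↔ ∀ x ∈ D, ψ x v = 0 := by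
    intro v
    constructor
    · intro hv x hx
      exact (LieModule.mem_maxTrivSubmodule F ↥D I v).mp hv ⟨x, hx⟩
    · intro h
      exact (LieModule.mem_maxTrivSubmodule F ↥D I v).mpr fun d => h d.1 d.2
  -- W is invariant under every ψ k
  have hinv : ∀ (k0 : K), ∀ v ∈ W, ψ k0 v ∈ W := by
    intro k0 v hv
    rw [hWmem] at hv ⊢
    intro x hx
    have hxk : ⁅x, k0⁆ ∈ D := by
      rw [← lie_skew]
      exact D.neg_mem (D.lie_mem hx)
    have h1 : ψ ⁅x, k0⁆ = ψ x * ψ k0 - ψ k0 * ψ x := by rw [LieHom.map_lie, Ring.lie_def]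
    have keyv := LinearMap.congr_fun h1 v
    simp only [LinearMap.sub_apply, Module.End.mul_apply, hv x hx, map_zero, sub_zero] at keyv
    rw [← keyv]
    exact hv _ hxk
  -- restriction to W is nilpotent
  set res : K → Module.End F ↥W := fun k0 => (ψ k0).restrict (fun v hv => hinv k0 v hv) with hres
  have hcomm : ∀ k1 k2 : K, Commute (res k1) (res k2) := by
    intro k1 k2
    have h12 : ⁅k1, k2⁆ ∈ D := hmemD k1 k2
    ext v
    have e : ψ k1 (ψ k2 (v : I)) = ψ k2 (ψ k1 (v : I)) := by
      have h1 : ψ ⁅k1, k2⁆ = ψ k1 * ψ k2 - ψ k2 * ψ k1 := by rw [LieHom.map_lie, Ring.lie_def]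
      have keyv := LinearMap.congr_fun h1 (v : I)
      simp only [LinearMap.sub_apply, Module.End.mul_apply] at keyv
      have h0 : ψ ⁅k1, k2⁆ (v : I) = 0 := (hWmem (v : I)).mp v.2 _ h12
      rw [h0] at keyv
      exact (sub_eq_zero.mp keyv.symm)
    show (((res k1 * res k2) v : ↥W) : I) = ((res k2 * res k1) v : I)
    simp only [Module.End.mul_apply, hres, LinearMap.restrict_coe_apply]
    exact e
  have hresnil : ∀ k0 : K, IsNilpotent (res k0) := by
    intro k0
    have hk0 : k0 ∈ Submodule.span F s := by rw [hspan]; trivial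
    induction hk0 using Submodule.span_induction with
    | mem x hx =>
      obtain ⟨m, hm⟩ := hnil x hx
      refine ⟨m, ?_⟩
      rw [hres]
      simp only
      rw [Module.End.pow_restrict]
      ext v
      simp [hm]
    | zero =>
      refine ⟨1, ?_⟩
      ext v
      simp [hres]
    | add x y _ _ ihx ihy =>
      have hadd : res (x + y) = res x + res y := by
        ext v
        simp [hres, LinearMap.restrict_coe_apply]
      rw [hadd]
      exact (hcomm x y).isNilpotent_add ihx ihy
    | smul c x _ ihx =>
      have hsmul : res (c • x) = c • res x := by
        ext v
        simp [hres, LinearMap.restrict_coe_apply]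
      rw [hsmul]
      exact ihx.smul c
  -- quotient module
  have hle : ∀ k0 : K, W ≤ W.comap (ψ k0) := fun k0 v hv => hinv k0 v hv
  set ψQ : K →ₗ⁅F⁆ Module.End F (I ⧸ W) :=
    { toFun := fun k0 => Submodule.mapQ W W (ψ k0) (hle k0)
      map_add' := by
        intro x y
        apply Submodule.linearMap_qext
        ext v
        simp
      map_smul' := by
        intro c x
        apply Submodule.linearMap_qext
        ext v
        simp
      map_lie' := by
        intro x y
        apply Submodule.linearMap_qext
        ext v
        simp [Ring.lie_def, LieHom.map_lie] } with hψQ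
  have hψQapp : ∀ (k0 : K) (v : I), ψQ k0 (Submodule.Quotient.mk v) =
      Submodule.Quotient.mk (ψ k0 v) := fun k0 v => rfl
  have hWpos : 0 < finrank F ↥W := by
    haveI : Nontrivial ↥W := hWnt
    exact finrank_pos
  have hQlt : finrank F (I ⧸ W) < finrank F I := by
    have := Submodule.finrank_quotient_add_finrank W
    omega
  have hQnil : ∀ k0 : K, IsNilpotent (ψQ k0) := by
    refine IH (finrank F K + finrank F (I ⧸ W)) (by omega) K (I ⧸ W) ψQ s le_rfl hspan hbr ?_
    intro x hx
    obtain ⟨m, hm⟩ := hnil x hx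
    refine ⟨m, ?_⟩
    have hq : (ψQ x) ^ m = Submodule.mapQ W W ((ψ x) ^ m) (W.le_comap_pow_of_le_comap (hle x) m) := by
      rw [W.mapQ_pow (hle x) m]; rfl
    rw [hq]
    apply Submodule.linearMap_qext
    ext v
    simp [hm]
  -- glue
  obtain ⟨a, ha⟩ := hQnil k
  obtain ⟨b, hb⟩ := hresnil k
  refine ⟨b + a, ?_⟩
  ext v
  have h1 : (ψ k ^ a) v ∈ W := by
    have := LinearMap.congr_fun ha (Submodule.Quotient.mk v)
    have h2 : (ψQ k) ^ a = Submodule.mapQ W W ((ψ k) ^ a) (W.le_comap_pow_of_le_comap (hle k) a) := by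
      rw [W.mapQ_pow (hle k) a]; rfl
    rw [h2] at this
    rw [Submodule.mapQ_apply] at this
    simpa [Submodule.Quotient.mk_eq_zero] using this
  have h3 : ∀ w ∈ W, (ψ k ^ b) w = 0 := by
    intro w hw
    have h4 : (res k) ^ b = ((ψ k) ^ b).restrict
        (Module.End.pow_apply_mem_of_forall_mem b (fun v hv => hinv k v hv)) := by
      rw [hres]
      simp only
      rw [Module.End.pow_restrict]
    have := LinearMap.congr_fun hb (⟨w, hw⟩ : ↥W)
    rw [h4] at this
    have h5 : (((ψ k ^ b).restrict
        (Module.End.pow_apply_mem_of_forall_mem b (fun v hv => hinv k v hv)) ⟨w, hw⟩ : ↥W) : I)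
        = ((0 : Module.End F ↥W) ⟨w, hw⟩ : I) := by rw [this]
    simpa [LinearMap.restrict_coe_apply] using h5
  have : (ψ k ^ (b + a)) v = (ψ k ^ b) ((ψ k ^ a) v) := by
    rw [pow_add, Module.End.mul_apply]
  rw [this, h3 _ h1]
  simp
/-- Let `K` be a finite-dimensional solvable Lie algebra over an algebraically closed
field `F` of characteristic `0`, and `I` a finite-dimensional `K`-module via
`ψ : K → gl(I)`. If `(α, β)` is a compatible pair (i.e. `[β, ψ k] = ψ (α k)` for all
`k`) with `α` a bijective derivation of finite order, then `ψ k` is nilpotent for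
every `k ∈ K`. -/
theorem stmt15 (F : Type*) [Field F] [IsAlgClosed F] [CharZero F]
    (K : Type*) [LieRing K] [LieAlgebra F K] [FiniteDimensional F K]
    [LieAlgebra.IsSolvable K]
    (I : Type*) [AddCommGroup I] [Module F I] [FiniteDimensional F I]
    (ψ : K →ₗ⁅F⁆ Module.End F I)
    (α : LieDerivation F K K) (hbij : Function.Bijective α)
    (n : ℕ) (hn : 1 ≤ n) (hord : (α.toLinearMap : Module.End F K) ^ n = 1)
    (β : Module.End F I)
    (hcomp : ∀ k : K, ⁅β, ψ k⁆ = ψ (α k)) :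
    ∀ k : K, IsNilpotent (ψ k) := by
  set A : Module.End F K := α.toLinearMap with hA
  have hAa : ∀ x : K, A x = α x := fun x => rfl
  set s : Set K := {x : K | ∃ ζ : F, ζ ≠ 0 ∧ A x = ζ • x} with hs
  have hnF : ((n : F)) ≠ 0 := Nat.cast_ne_zero.mpr (by omega)
  have hsq : Squarefree (Polynomial.X ^ n - Polynomial.C (1 : F)) :=
    (Polynomial.separable_X_pow_sub_C (1 : F) hnF one_ne_zero).squarefree
  have haev : Polynomial.aeval A (Polynomial.X ^ n - Polynomial.C (1 : F)) = 0 := by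
    rw [map_sub, map_pow, Polynomial.aeval_X, Polynomial.aeval_C, map_one, hord, sub_self]
  have hss : A.IsSemisimple := Module.End.isSemisimple_of_squarefree_aeval_eq_zero hsq haev
  have hspan : Submodule.span F s = ⊤ := by
    rw [eq_top_iff, ← Module.End.iSup_maxGenEigenspace_eq_top A]
    refine iSup_le fun μ => ?_
    rw [hss.isFinitelySemisimple.maxGenEigenspace_eq_eigenspace]
    rcases eq_or_ne μ 0 with rfl | hμ
    · rw [Module.End.eigenspace_zero]
      intro x hx
      have hx1 : A x = 0 := LinearMap.mem_ker.mp hx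
      have hx0 : x = 0 := hbij.injective (by rw [← hAa, hx1, map_zero])
      simp [hx0]
    · intro x hx
      exact Submodule.subset_span ⟨μ, hμ, Module.End.mem_eigenspace_iff.mp hx⟩
  have hbr : ∀ x ∈ s, ∀ y ∈ s, ⁅x, y⁆ ∈ s := by
    rintro x ⟨ζ, hζ, hx⟩ y ⟨η, hη, hy⟩
    have hl : A ⁅x, y⁆ = (ζ + η) • ⁅x, y⁆ := by
      rw [hAa, LieDerivation.apply_lie_eq_add, ← hAa, ← hAa, hx, hy, smul_lie, lie_smul,
        add_smul]
      abel
    rcases eq_or_ne (ζ + η) 0 with h0 | h0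
    · have hz0 : A ⁅x, y⁆ = 0 := by rw [hl, h0, zero_smul]
      have hz : ⁅x, y⁆ = 0 := hbij.injective (by rw [← hAa, hz0, map_zero])
      rw [hz]
      exact ⟨1, one_ne_zero, by simp⟩
    · exact ⟨ζ + η, h0, hl⟩
  have hnils : ∀ x ∈ s, IsNilpotent (ψ x) := by
    rintro x ⟨ζ, hζ, hx⟩
    apply aux_nilpotent_of_bracket_smul hζ (β := β)
    rw [hcomp x, ← hAa, hx, map_smul]
  exact aux_main F (finrank F K + finrank F I) K I ψ s le_rfl hspan hbr hnils
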